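/- Explicit moderately steep scales. For every real beta >= 8, the sequences Gamma_k := e^{(beta+1)(3/2)^k} and gamma_k := (1/8) e^{beta (3/2)^{k+1}}, k >= 1, are moderately steep scales; that is, they are strictly increasing and satisfy: (1) Gamma_1 >= 2 and Gamma_k < gamma_k/2 for all k >= 1; (2) with theta_k := sum_{h=1}^k (Gamma_h + gamma_h), one has inf over k >= 1 of Gamma_{k+1}/theta_k >= 5; (3) sum over k >= 1 of Gamma_k/gamma_k <= 1/2; (4) a_0 := sum over k >= 0 of 2^{-k} log( [2(Gamma_{k+1}+gamma_{k+1})+1]^2 ) < infinity; (5) for every a > 0, sum over k >= 1 of [2(theta_k+Gamma_k)+1]^2 e^{-a 2^{k-1}} < infinity. -/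

import Mathlib

open Real

/-- `θ_k := ∑_{h=1}^k (Γ_h + γ_h)`. -/
noncomputable def thetaSeq (Γ γ : ℕ → ℝ) (k : ℕ) : ℝ := ∑ h ∈ Finset.Icc 1 k, (Γ h + γ h)

/-- The scale `Γ_k := e^{(β+1)(3/2)^k}`. -/
noncomputable def GamSeq (β : ℝ) (k : ℕ) : ℝ := Real.exp ((β + 1) * (3 / 2) ^ k)

/-- The scale `γ_k := (1/8) e^{β(3/2)^{k+1}}`. -/
noncomputable def gamSeq (β : ℝ) (k : ℕ) : ℝ := (1 / 8) * Real.exp (β * (3 / 2) ^ (k + 1))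

lemma mss_mul_exp_le_exp {c A B : ℝ} (hc : 0 < c) (h : Real.log c ≤ B - A) :
    c * Real.exp A ≤ Real.exp B := by
  rw [← Real.exp_log hc, ← Real.exp_add]
  exact Real.exp_le_exp.2 (by linarith)

lemma mss_mul_exp_lt_exp {c A B : ℝ} (hc : 0 < c) (h : Real.log c < B - A) :
    c * Real.exp A < Real.exp B := by
  rw [← Real.exp_log hc, ← Real.exp_add]
  exact Real.exp_lt_exp.2 (by linarith)

lemma mss_summable_aux {C a : ℝ} (ha : 0 < a) :
    Summable (fun k : ℕ => Real.exp (C * (3/2)^k - a * 2^k)) := by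
  obtain ⟨N, hN⟩ : ∃ N : ℕ, 2*C/a < (4/3:ℝ)^N :=
    pow_unbounded_of_one_lt (2*C/a) (by norm_num)
  rw [← summable_nat_add_iff N]
  apply Summable.of_nonneg_of_le (f := fun n : ℕ => Real.exp (-(a/2 * 2^N)) ^ n)
    (fun n => (Real.exp_pos _).le)
  · intro n
    rw [← Real.exp_nat_mul]
    apply Real.exp_le_exp.2
    have hyN : ((4:ℝ)/3)^N ≤ (4/3)^(n+N) := pow_le_pow_right₀ (by norm_num) (by omega)
    have hy : 2*C/a < (4/3:ℝ)^(n+N) := lt_of_lt_of_le hN hyN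
    have hx : (0:ℝ) < (3/2:ℝ)^(n+N) := by positivity
    have h1 : C * (3/2)^(n+N) ≤ a/2 * 2^(n+N) := by
      have h2' : 2*C < a * (4/3:ℝ)^(n+N) := by
        rw [div_lt_iff₀ ha] at hy; linarith
      have hmp : ((4:ℝ)/3)^(n+N) * (3/2)^(n+N) = 2^(n+N) := by
        rw [← mul_pow]; norm_num
      nlinarith [mul_lt_mul_of_pos_right h2' hx]
    have h2 : (n:ℝ) ≤ 2^n := by exact_mod_cast (Nat.lt_two_pow_self (n := n)).le
    have hpq : (2:ℝ)^(n+N) = 2^n * 2^N := pow_add 2 n N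
    have h3 := mul_le_mul_of_nonneg_right h2 (show (0:ℝ) ≤ a/2*2^N by positivity)
    nlinarith [h1, h3, hpq]
  · apply summable_geometric_of_lt_one (Real.exp_pos _).le
    rw [← Real.exp_zero]
    refine Real.exp_lt_exp.2 ?_
    have : (0:ℝ) < a/2 * 2^N := by positivity
    linarith

/-- Explicit moderately steep scales.  For every `β ≥ 8` the sequences
`Γ_k = e^{(β+1)(3/2)^k}` and `γ_k = (1/8) e^{β(3/2)^{k+1}}`, `k ≥ 1`, are moderately steep
scales: they are strictly increasing and satisfy
(1) `Γ₁ ≥ 2` and `Γ_k < γ_k/2` for `k ≥ 1`;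
(2) `Γ_{k+1}/θ_k ≥ 5` for all `k ≥ 1`, where `θ_k = ∑_{h=1}^k (Γ_h + γ_h)`;
(3) `∑_{k≥1} Γ_k/γ_k ≤ 1/2`;
(4) `a₀ = ∑_{k≥0} 2^{-k} log([2(Γ_{k+1}+γ_{k+1})+1]²) < ∞`;
(5) for every `a > 0`, `∑_{k≥1} [2(θ_k+Γ_k)+1]² e^{-a 2^{k-1}} < ∞`. -/
theorem moderately_steep_scales (β : ℝ) (hβ : 8 ≤ β) :
    (∀ k : ℕ, 1 ≤ k → GamSeq β k < GamSeq β (k + 1)) ∧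
    (∀ k : ℕ, 1 ≤ k → gamSeq β k < gamSeq β (k + 1)) ∧
    2 ≤ GamSeq β 1 ∧
    (∀ k : ℕ, 1 ≤ k → GamSeq β k < gamSeq β k / 2) ∧
    (∀ k : ℕ, 1 ≤ k → 5 ≤ GamSeq β (k + 1) / thetaSeq (GamSeq β) (gamSeq β) k) ∧
    (∃ S : ℝ, HasSum (fun k : ℕ => GamSeq β (k + 1) / gamSeq β (k + 1)) S ∧ S ≤ 1 / 2) ∧
    Summable (fun k : ℕ =>
      (2 : ℝ) ^ (-(k : ℤ)) * Real.log ((2 * (GamSeq β (k + 1) + gamSeq β (k + 1)) + 1) ^ 2)) ∧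
    (∀ a : ℝ, 0 < a → Summable (fun k : ℕ =>
      (2 * (thetaSeq (GamSeq β) (gamSeq β) (k + 1) + GamSeq β (k + 1)) + 1) ^ 2 *
        Real.exp (-a * 2 ^ k))) := by
  have hlog2 : Real.log 2 < 0.7 := by linarith [Real.log_two_lt_d9]
  have hpow1 : ∀ k : ℕ, (1:ℝ) ≤ (3/2)^k := fun k => one_le_pow₀ (by norm_num)
  have hpowk : ∀ k : ℕ, 1 ≤ k → (3/2:ℝ) ≤ (3/2)^k :=
    fun k hk => le_self_pow₀ (by norm_num) (by omega)
  have hγpos : ∀ k, 0 < gamSeq β k := fun k => by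
    unfold gamSeq; positivity
  have hΓpos : ∀ k, 0 < GamSeq β k := fun k => Real.exp_pos _
  -- (1b): Γ_k < γ_k / 2 for k ≥ 1
  have hΓγ : ∀ k : ℕ, 1 ≤ k → GamSeq β k < gamSeq β k / 2 := by
    intro k hk
    unfold GamSeq gamSeq
    have hlog16 : Real.log 16 = 4 * Real.log 2 := by
      rw [show (16:ℝ) = 2^4 by norm_num, Real.log_pow]; push_cast; ring
    have hsub : β * (3/2)^(k+1) - (β+1) * (3/2)^k = (3/2)^k * (β/2 - 1) := by
      rw [pow_succ]; ring
    have h16 : (16:ℝ) * Real.exp ((β+1) * (3/2)^k) < Real.exp (β * (3/2)^(k+1)) := by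
      apply mss_mul_exp_lt_exp (by norm_num)
      rw [hsub, hlog16]
      nlinarith [hpowk k hk]
    linarith
  -- γ grows at least geometrically
  have hγgrow : ∀ k : ℕ, 2 * gamSeq β k ≤ gamSeq β (k+1) := by
    intro k
    unfold gamSeq
    have h2 : (2:ℝ) * Real.exp (β * (3/2)^(k+1)) ≤ Real.exp (β * (3/2)^(k+1+1)) := by
      apply mss_mul_exp_le_exp (by norm_num)
      have hsub : β * (3/2)^(k+1+1) - β * (3/2)^(k+1) = β * (1/2) * (3/2)^(k+1) := by
        rw [pow_succ (3/2:ℝ) (k+1)]; ring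
      rw [hsub]
      nlinarith [hpow1 (k+1)]
    linarith
  -- γ_k ≥ 1
  have hγ1 : ∀ k : ℕ, (1:ℝ) ≤ gamSeq β k := by
    intro k
    unfold gamSeq
    have h12 : (12:ℝ) ≤ β * (3/2)^(k+1) := by nlinarith [hpowk (k+1) (by omega)]
    have := Real.add_one_le_exp (β * (3/2)^(k+1))
    linarith
  -- partial sums of γ
  have hγsum : ∀ k : ℕ, ∑ h ∈ Finset.Icc 1 k, gamSeq β h ≤ 2 * gamSeq β k := by
    intro k
    induction k with
    | zero => simp; linarith [hγpos 0]
    | succ k ih =>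
      rw [Finset.sum_Icc_succ_top (by omega : 1 ≤ k + 1)]
      linarith [hγgrow k]
  -- θ_k ≤ 3 γ_k
  have hθ : ∀ k : ℕ, 1 ≤ k → thetaSeq (GamSeq β) (gamSeq β) k ≤ 3 * gamSeq β k := by
    intro k hk
    unfold thetaSeq
    have h1 : ∑ h ∈ Finset.Icc 1 k, (GamSeq β h + gamSeq β h)
        ≤ ∑ h ∈ Finset.Icc 1 k, (3/2) * gamSeq β h := by
      apply Finset.sum_le_sum
      intro h hh
      have := hΓγ h (Finset.mem_Icc.1 hh).1
      linarith
    rw [← Finset.mul_sum] at h1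
    nlinarith [hγsum k]
  refine ⟨?_, ?_, ?_, hΓγ, ?_, ?_, ?_, ?_⟩
  -- Γ strictly increasing
  · intro k _
    unfold GamSeq
    apply Real.exp_lt_exp.2
    have hs : (3/2:ℝ)^(k+1) = (3/2)^k * (3/2) := pow_succ _ _
    nlinarith [hpow1 k]
  -- γ strictly increasing
  · intro k _
    linarith [hγpos k, hγgrow k]
  -- Γ₁ ≥ 2
  · unfold GamSeq
    have h : (13:ℝ) ≤ (β+1) * (3/2)^1 := by norm_num; linarith
    have := Real.add_one_le_exp ((β+1) * (3/2)^1)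
    linarith
  -- (2)
  · intro k hk
    have hθpos : 0 < thetaSeq (GamSeq β) (gamSeq β) k := by
      unfold thetaSeq
      exact Finset.sum_pos (fun h _ => add_pos (hΓpos h) (hγpos h))
        (Finset.nonempty_Icc.2 hk)
    rw [le_div_iff₀ hθpos]
    have h2 : 15 * gamSeq β k ≤ GamSeq β (k+1) := by
      unfold GamSeq gamSeq
      have h : (15/8:ℝ) * Real.exp (β * (3/2)^(k+1)) ≤ Real.exp ((β+1) * (3/2)^(k+1)) := by
        apply mss_mul_exp_le_exp (by norm_num)
        have hsub : (β+1) * (3/2)^(k+1) - β * (3/2)^(k+1) = (3/2)^(k+1) := by ring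
        rw [hsub]
        have := Real.log_le_log (show (0:ℝ) < 15/8 by norm_num) (show (15/8:ℝ) ≤ 2 by norm_num)
        linarith [hpow1 (k+1)]
      linarith
    linarith [hθ k hk]
  -- (3)
  · have hbound : ∀ k : ℕ, GamSeq β (k+1) / gamSeq β (k+1) ≤ (1/8) * (1/2:ℝ)^k := by
      intro k
      have hfk : GamSeq β (k+1) / gamSeq β (k+1)
          = 8 * Real.exp ((β+1) * (3/2)^(k+1) - β * (3/2)^(k+1+1)) := by
        unfold GamSeq gamSeq
        rw [Real.exp_sub]
        field_simp
      rw [hfk]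
      set E := (β+1) * (3/2)^(k+1) - β * (3/2)^(k+1+1) with hEdef
      have hB : 1 + (k:ℝ) * (1/2) ≤ (3/2:ℝ)^k := by
        have := one_add_mul_le_pow (show (-2:ℝ) ≤ 1/2 by norm_num) k
        norm_num at this ⊢
        linarith
      have hE : E ≤ -(4.5 + 2.25 * k) := by
        have hs1 : (3/2:ℝ)^(k+1) = (3/2)^k * (3/2) := pow_succ _ _
        have hs2 : (3/2:ℝ)^(k+1+1) = (3/2)^k * (3/2) * (3/2) := by
          rw [pow_succ, pow_succ]
        rw [hEdef, hs1, hs2]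
        nlinarith [hB, mul_nonneg (sub_nonneg.2 hB) (show (0:ℝ) ≤ (3/4)*β - 3/2 by linarith)]
      have h2k : (0:ℝ) < 2^k := by positivity
      have hlogc : Real.log (64 * 2^k) = ((k:ℝ) + 6) * Real.log 2 := by
        rw [show (64:ℝ) * 2^k = 2^(k+6) by rw [pow_add]; norm_num [mul_comm], Real.log_pow]
        push_cast; ring
      have hc : (64:ℝ) * 2^k * Real.exp (-(4.5 + 2.25 * k)) ≤ 1 := by
        have h := mss_mul_exp_le_exp (c := 64 * 2^k) (A := -(4.5 + 2.25 * (k:ℝ))) (B := 0)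
          (by positivity) (by rw [hlogc]; nlinarith [k.cast_nonneg (α := ℝ), hlog2,
            (Real.log_pos (by norm_num : (1:ℝ) < 2)).le])
        rwa [Real.exp_zero] at h
      have h1 : Real.exp E ≤ Real.exp (-(4.5 + 2.25 * (k:ℝ))) := Real.exp_le_exp.2 hE
      have hhalf : ((1:ℝ)/2)^k = (2^k)⁻¹ := by rw [one_div, inv_pow]
      rw [hhalf, show (1/8:ℝ) * (2^k)⁻¹ = 1/(8 * 2^k) by
        rw [one_div, one_div, mul_inv],
        le_div_iff₀ (by positivity : (0:ℝ) < 8 * 2^k)]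
      nlinarith [mul_le_mul_of_nonneg_left h1 (show (0:ℝ) ≤ 64 * 2^k by positivity), hc]
    have hg : Summable (fun k : ℕ => (1/8:ℝ) * (1/2)^k) :=
      (summable_geometric_of_lt_one (by norm_num) (by norm_num)).mul_left _
    have hf : Summable (fun k : ℕ => GamSeq β (k+1) / gamSeq β (k+1)) :=
      Summable.of_nonneg_of_le (fun k => (div_pos (hΓpos _) (hγpos _)).le) hbound hg
    refine ⟨_, hf.hasSum, ?_⟩
    calc ∑' k : ℕ, GamSeq β (k+1) / gamSeq β (k+1)
        ≤ ∑' k : ℕ, (1/8:ℝ) * (1/2)^k := Summable.tsum_le_tsum hbound hf hg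
      _ = (1/8) * (1 - 1/2)⁻¹ := by
          rw [tsum_mul_left, tsum_geometric_of_lt_one (by norm_num) (by norm_num)]
      _ ≤ 1/2 := by norm_num
  -- (4)
  · have hbound : ∀ k : ℕ,
        (2:ℝ)^(-(k:ℤ)) * Real.log ((2 * (GamSeq β (k+1) + gamSeq β (k+1)) + 1)^2)
          ≤ (9 * β / 2) * (3/4)^k := by
      intro k
      set x := 2 * (GamSeq β (k+1) + gamSeq β (k+1)) + 1 with hx
      have hx1 : (1:ℝ) ≤ x := by
        have := hΓpos (k+1); have := hγpos (k+1); rw [hx]; linarith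
      have hx4 : x ≤ 4 * gamSeq β (k+1) := by
        have h1 := hΓγ (k+1) (by omega)
        have h2 := hγ1 (k+1)
        rw [hx]; linarith
      have hxe : x ≤ Real.exp (β * (3/2)^(k+1+1)) := by
        have h4 : 4 * gamSeq β (k+1) = (1/2) * Real.exp (β * (3/2)^(k+1+1)) := by
          unfold gamSeq; ring
        have := Real.exp_pos (β * (3/2)^(k+1+1))
        linarith [hx4, h4 ▸ hx4]
      have hlogx : Real.log x ≤ β * (3/2)^(k+1+1) :=
        (Real.log_le_iff_le_exp (by linarith)).2 hxe
      have hlogsq : Real.log (x^2) = 2 * Real.log x := by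
        rw [Real.log_pow]; push_cast; ring
      have hzp : (2:ℝ)^(-(k:ℤ)) = ((2:ℝ)^k)⁻¹ := by
        rw [zpow_neg, zpow_natCast]
      have h34 : ((3:ℝ)/4)^k = (3/2)^k * ((2:ℝ)^k)⁻¹ := by
        rw [← inv_pow, ← mul_pow]; norm_num
      have h2k : (0:ℝ) < (2:ℝ)^k := by positivity
      rw [hzp, hlogsq]
      have hs2 : (3/2:ℝ)^(k+1+1) = (3/2)^k * (9/4) := by
        rw [pow_succ, pow_succ]; ring
      have hmain : ((2:ℝ)^k)⁻¹ * (2 * Real.log x)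
          ≤ ((2:ℝ)^k)⁻¹ * (2 * (β * ((3/2)^k * (9/4)))) := by
        apply mul_le_mul_of_nonneg_left _ (by positivity)
        rw [← hs2]; linarith
      calc ((2:ℝ)^k)⁻¹ * (2 * Real.log x)
          ≤ ((2:ℝ)^k)⁻¹ * (2 * (β * ((3/2)^k * (9/4)))) := hmain
        _ = (9 * β / 2) * (3/4)^k := by rw [h34]; ring
    apply Summable.of_nonneg_of_le _ hbound
      (((summable_geometric_of_lt_one (by norm_num) (by norm_num)).mul_left (9 * β / 2)))
    intro k
    apply mul_nonneg (by positivity)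
    apply Real.log_nonneg
    have := hΓpos (k+1); have := hγpos (k+1)
    nlinarith
  -- (5)
  · intro a ha
    apply Summable.of_nonneg_of_le
      (fun k => mul_nonneg (sq_nonneg _) (Real.exp_pos _).le) _
      (mss_summable_aux (C := 9 * β / 2 + 2) ha)
    intro k
    set θ := thetaSeq (GamSeq β) (gamSeq β) (k+1) with hθdef
    have hθ3 : θ ≤ 3 * gamSeq β (k+1) := hθ (k+1) (by omega)
    have hθ0 : 0 ≤ θ := by
      rw [hθdef]; unfold thetaSeq
      exact Finset.sum_nonneg fun h _ => (add_pos (hΓpos h) (hγpos h)).le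
    have hΓle : GamSeq β (k+1) ≤ gamSeq β (k+1) := by
      have := hΓγ (k+1) (by omega); have := hγpos (k+1); linarith
    set B := β * (3/2:ℝ)^(k+1+1) with hBdef
    have hγB : gamSeq β (k+1) = (1/8) * Real.exp B := rfl
    have harg : 2 * (θ + GamSeq β (k+1)) + 1 ≤ Real.exp (B + 1) := by
      have h9 : 2 * (θ + GamSeq β (k+1)) + 1 ≤ 9 * gamSeq β (k+1) := by
        have := hγ1 (k+1); linarith
      have h98 : (9/8:ℝ) * Real.exp B ≤ Real.exp (B + 1) := by
        apply mss_mul_exp_le_exp (by norm_num)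
        have := Real.log_le_log (show (0:ℝ) < 9/8 by norm_num) (show (9/8:ℝ) ≤ 2 by norm_num)
        linarith
      rw [hγB] at h9; linarith
    have hargpos : (0:ℝ) ≤ 2 * (θ + GamSeq β (k+1)) + 1 := by
      have := hΓpos (k+1); linarith
    have hsq : (2 * (θ + GamSeq β (k+1)) + 1)^2 ≤ Real.exp (2 * B + 2) := by
      have h := pow_le_pow_left₀ hargpos harg 2
      have he : Real.exp (B + 1)^2 = Real.exp (2 * B + 2) := by
        rw [sq, ← Real.exp_add]; ring_nf
      linarith [h, he ▸ h]
    have hBC : Real.exp (2 * B + 2) ≤ Real.exp ((9 * β / 2 + 2) * (3/2)^k) := by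
      apply Real.exp_le_exp.2
      have hs2 : (3/2:ℝ)^(k+1+1) = (3/2)^k * (9/4) := by
        rw [pow_succ, pow_succ]; ring
      rw [hBdef, hs2]
      nlinarith [hpow1 k]
    calc (2 * (θ + GamSeq β (k+1)) + 1)^2 * Real.exp (-a * 2^k)
        ≤ Real.exp ((9 * β / 2 + 2) * (3/2)^k) * Real.exp (-a * 2^k) := by
          apply mul_le_mul_of_nonneg_right (le_trans hsq hBC) (Real.exp_pos _).le
      _ = Real.exp ((9 * β / 2 + 2) * (3/2)^k - a * 2^k) := by
          rw [← Real.exp_add]; ring_nf
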